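/- Let k ∈ L¹(ℝ^d) with ∫ k = 0, and let μ be a modulus of continuity such that |x| k(x) ∈ L¹(ℝ^d) and such that Γ_μ(s) := s μ(1/s) is non-decreasing on [1,∞). Then there exists a constant C > 0, depending only on ‖k‖_{L¹} and ‖ |·| k ‖_{L¹}, such that for all λ ≥ 1: λ^d ∫_{ℝ^d} |k(λ y)| μ(min(|y|,1)) dy ≤ C μ(1/λ). -/

import Mathlib

open MeasureTheory

/-- Kernel estimate. If `k ∈ L¹(ℝ^d)` has zero mean, `‖x‖ k(x) ∈ L¹`,
and `μ` is a modulus of continuity (continuous, non-decreasing, `μ 0 = 0`, nonnegative)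
such that `Γ_μ(s) = s μ(1/s)` is non-decreasing on `[1,∞)`, then there is `C > 0`,
depending only on `‖k‖_{L¹}` and `‖‖·‖ k‖_{L¹}`, such that for all `λ ≥ 1`:
`λ^d ∫ |k(λ y)| μ(min(‖y‖,1)) dy ≤ C μ(1/λ)`. -/
theorem kernel_modulus_estimate {d : ℕ}
    (k : EuclideanSpace ℝ (Fin d) → ℝ)
    (hk : Integrable k)
    (hk0 : ∫ x, k x = 0)
    (hkx : Integrable (fun x => ‖x‖ * |k x|))
    (μ : ℝ → ℝ)
    (hμcont : ContinuousOn μ (Set.Icc 0 1))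
    (hμmono : MonotoneOn μ (Set.Icc 0 1))
    (hμ0 : μ 0 = 0)
    (hμnonneg : ∀ s, 0 ≤ s → 0 ≤ μ s)
    (hΓmono : ∀ s t : ℝ, 1 ≤ s → s ≤ t → s * μ (1 / s) ≤ t * μ (1 / t)) :
    ∃ C > 0, ∀ l : ℝ, 1 ≤ l →
      l ^ d * ∫ y, |k (l • y)| * μ (min ‖y‖ 1) ≤ C * μ (1 / l) := by
  set I1 := ∫ x, |k x| with hI1
  set I2 := ∫ x, ‖x‖ * |k x| with hI2
  have hI1nn : 0 ≤ I1 := integral_nonneg fun x => abs_nonneg _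
  have hI2nn : 0 ≤ I2 := integral_nonneg fun x => mul_nonneg (norm_nonneg _) (abs_nonneg _)
  refine ⟨I1 + I2 + 1, by positivity, fun l hl => ?_⟩
  have hl0 : (0:ℝ) < l := lt_of_lt_of_le one_pos hl
  have hlne : l ≠ 0 := ne_of_gt hl0
  have hld : (0:ℝ) < l ^ d := pow_pos hl0 d
  have hinvl : 0 < 1 / l := by positivity
  have hinvle : 1 / l ≤ 1 := by rw [div_le_one hl0]; exact hl
  have hμl : 0 ≤ μ (1 / l) := hμnonneg _ hinvl.le
  -- integrability facts
  have hka : Integrable (fun x => |k x|) := hk.abs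
  have hkl : Integrable (fun y => |k (l • y)|) := hka.comp_smul hlne
  have hnorm : ∀ y : EuclideanSpace ℝ (Fin d), ‖l • y‖ = l * ‖y‖ := by
    intro y
    rw [norm_smul, Real.norm_eq_abs, abs_of_pos hl0]
  have hkxl : Integrable (fun y => ‖y‖ * |k (l • y)|) := by
    have h1 : Integrable (fun y => ‖l • y‖ * |k (l • y)|) := hkx.comp_smul hlne
    have h2 := h1.const_mul l⁻¹
    refine h2.congr (Filter.Eventually.of_forall fun y => ?_)
    show l⁻¹ * (‖l • y‖ * |k (l • y)|) = ‖y‖ * |k (l • y)|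
    rw [hnorm y]
    field_simp
  -- continuity of the modulus factor
  have hc : Continuous fun y : EuclideanSpace ℝ (Fin d) => μ (min ‖y‖ 1) := by
    refine hμcont.comp_continuous (continuous_norm.min continuous_const) fun y => ?_
    exact ⟨le_min (norm_nonneg _) zero_le_one, min_le_right _ _⟩
  -- integrability of the left-hand integrand
  have hf_int : Integrable (fun y => |k (l • y)| * μ (min ‖y‖ 1)) := by
    refine (hkl.const_mul (μ 1)).mono'
      (hkl.aestronglyMeasurable.mul hc.aestronglyMeasurable)
      (Filter.Eventually.of_forall fun y => ?_)
    have hmem : min ‖y‖ 1 ∈ Set.Icc (0:ℝ) 1 :=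
      ⟨le_min (norm_nonneg _) zero_le_one, min_le_right _ _⟩
    have hμle : μ (min ‖y‖ 1) ≤ μ 1 :=
      hμmono hmem ⟨zero_le_one, le_refl 1⟩ (min_le_right _ _)
    have hnonneg : 0 ≤ |k (l • y)| * μ (min ‖y‖ 1) :=
      mul_nonneg (abs_nonneg _) (hμnonneg _ hmem.1)
    rw [Real.norm_eq_abs, abs_of_nonneg hnonneg]
    calc |k (l • y)| * μ (min ‖y‖ 1) ≤ |k (l • y)| * μ 1 :=
          mul_le_mul_of_nonneg_left hμle (abs_nonneg _)
      _ = μ 1 * |k (l • y)| := mul_comm _ _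
  -- integrability of the majorant
  have hg_int : Integrable (fun y =>
      μ (1 / l) * |k (l • y)| + (l * μ (1 / l)) * (‖y‖ * |k (l • y)|)) :=
    (hkl.const_mul _).add (hkxl.const_mul _)
  -- pointwise bound
  have hpoint : ∀ y : EuclideanSpace ℝ (Fin d),
      |k (l • y)| * μ (min ‖y‖ 1) ≤
        μ (1 / l) * |k (l • y)| + (l * μ (1 / l)) * (‖y‖ * |k (l • y)|) := by
    intro y
    have hmem : min ‖y‖ 1 ∈ Set.Icc (0:ℝ) 1 :=
      ⟨le_min (norm_nonneg _) zero_le_one, min_le_right _ _⟩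
    have hkey : μ (min ‖y‖ 1) ≤ μ (1 / l) + (l * μ (1 / l)) * ‖y‖ := by
      rcases le_or_gt ‖y‖ (1 / l) with h | h
      · have hmin : min ‖y‖ 1 = ‖y‖ := min_eq_left (h.trans hinvle)
        have : μ ‖y‖ ≤ μ (1 / l) :=
          hμmono ⟨norm_nonneg _, (h.trans hinvle)⟩ ⟨hinvl.le, hinvle⟩ h
        rw [hmin]
        nlinarith [mul_nonneg (mul_nonneg hl0.le hμl) (norm_nonneg y)]
      · set t := min ‖y‖ 1 with ht
        have htpos : 0 < t := lt_min (hinvl.trans h) one_pos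
        have htle1 : t ≤ 1 := min_le_right _ _
        have hlt : 1 / l ≤ t := le_min h.le hinvle
        have hs1 : (1:ℝ) ≤ 1 / t := by
          rw [le_div_iff₀ htpos]; linarith
        have hs2 : 1 / t ≤ l := by
          rw [div_le_iff₀ htpos]
          calc (1:ℝ) = l * (1 / l) := by field_simp
            _ ≤ l * t := mul_le_mul_of_nonneg_left hlt hl0.le
        have hΓ := hΓmono (1 / t) l hs1 hs2
        rw [one_div_one_div] at hΓ
        have hμt : μ t ≤ t * (l * μ (1 / l)) := by
          have := mul_le_mul_of_nonneg_left hΓ htpos.le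
          calc μ t = t * ((1 / t) * μ t) := by field_simp
            _ ≤ t * (l * μ (1 / l)) := this
        have htley : t ≤ ‖y‖ := min_le_left _ _
        have hlμ : 0 ≤ l * μ (1 / l) := mul_nonneg hl0.le hμl
        calc μ t ≤ t * (l * μ (1 / l)) := hμt
          _ ≤ ‖y‖ * (l * μ (1 / l)) := mul_le_mul_of_nonneg_right htley hlμ
          _ ≤ μ (1 / l) + (l * μ (1 / l)) * ‖y‖ := by nlinarith
    calc |k (l • y)| * μ (min ‖y‖ 1)
        ≤ |k (l • y)| * (μ (1 / l) + (l * μ (1 / l)) * ‖y‖) :=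
          mul_le_mul_of_nonneg_left hkey (abs_nonneg _)
      _ = μ (1 / l) * |k (l • y)| + (l * μ (1 / l)) * (‖y‖ * |k (l • y)|) := by ring
  have hmono := integral_mono hf_int hg_int hpoint
  -- change of variables
  have hcv1 : (∫ y, |k (l • y)|) = (l ^ d)⁻¹ * I1 := by
    rw [Measure.integral_comp_smul volume (fun x => |k x|) l]
    simp [finrank_euclideanSpace_fin, smul_eq_mul,
      abs_of_nonneg (inv_nonneg.2 hld.le), hI1]
  have hcv2 : (∫ y, ‖y‖ * |k (l • y)|) = l⁻¹ * ((l ^ d)⁻¹ * I2) := by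
    have h1 : (∫ y, ‖y‖ * |k (l • y)|) = ∫ y, l⁻¹ * (‖l • y‖ * |k (l • y)|) := by
      congr 1
      ext y
      rw [hnorm y]
      field_simp
    rw [h1, integral_const_mul,
      Measure.integral_comp_smul volume (fun x => ‖x‖ * |k x|) l]
    simp [finrank_euclideanSpace_fin, smul_eq_mul,
      abs_of_nonneg (inv_nonneg.2 hld.le), hI2]
  have hsum : (∫ y, μ (1 / l) * |k (l • y)| + (l * μ (1 / l)) * (‖y‖ * |k (l • y)|))
      = μ (1 / l) * ((l ^ d)⁻¹ * I1) + (l * μ (1 / l)) * (l⁻¹ * ((l ^ d)⁻¹ * I2)) := by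
    rw [integral_add ((hkl.const_mul _)) ((hkxl.const_mul _)),
      integral_const_mul, integral_const_mul, hcv1, hcv2]
  rw [hsum] at hmono
  calc l ^ d * ∫ y, |k (l • y)| * μ (min ‖y‖ 1)
      ≤ l ^ d * (μ (1 / l) * ((l ^ d)⁻¹ * I1) + (l * μ (1 / l)) * (l⁻¹ * ((l ^ d)⁻¹ * I2))) :=
        mul_le_mul_of_nonneg_left hmono hld.le
    _ = μ (1 / l) * I1 + μ (1 / l) * I2 := by field_simp
    _ ≤ (I1 + I2 + 1) * μ (1 / l) := by nlinarith
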